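/- For the comprehensive prominence doctrine with initial values v(t_x) = v(¬t_x) = 0 for all x ∈ I: if there is a unique comprehensive prominence winner x, i.e., the upper revised valuation satisfies v*(t_x) > v*(¬t_x), then x is also the unique maximin winner: min over s ≠ x of v(p_{xs}) > min over s ≠ y of v(p_{ys}) for every y ≠ x. -/
import Mathlib


/-- A valuation for prominence doctrines: degrees of belief for the literals
`t_x` ("x is prominent"), `¬t_x`, and `p_{xy}` ("x is preferable to y", for
distinct `x, y`), under the identification `¬p_{xy} = p_{yx}`. -/
structure PVal (I : Type*) where
  t : I → ℝ
  nt : I → ℝ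
  p : I → I → ℝ

/-- Max over a (possibly empty) index set of reals: the empty max is `0`
(note `Real.sSup_empty = 0`). -/
noncomputable def sup0 (S : Set ℝ) : ℝ := sSup S

open Classical in
/-- Min over a (possibly empty) index set of reals: the empty min is `1`. -/
noncomputable def inf1 (S : Set ℝ) : ℝ := if S.Nonempty then sInf S else 1

/-- The one-step revision operator associated with the comprehensive prominence
doctrine, whose clauses are indexed by (nonempty) subsets `X ⊆ I`:
`⋁_{r ∈ X} t_r ∨ ⋁_{r ∈ X, s ∉ X} p_{sr}`, `¬t_y ∨ ⋁_{r ∈ X, s ∉ X} p_{sr}`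
for `y ∉ X`, and `¬t_x ∨ ¬t_y`; the min over an empty index set is `1` and
the max over an empty index set is `0`. -/
noncomputable def Tcp {I : Type*} (v : PVal I) : PVal I where
  t := fun x => max (v.t x)
    (sup0 {a : ℝ | ∃ X : Finset I, x ∈ X ∧
      a = min (inf1 {b : ℝ | ∃ r ∈ X, r ≠ x ∧ b = v.nt r})
              (inf1 {b : ℝ | ∃ r ∈ X, ∃ s, s ∉ X ∧ b = v.p r s})})
  nt := fun y => max (v.nt y)
    (max (sup0 {a : ℝ | ∃ r, r ≠ y ∧ a = v.t r})
         (sup0 {a : ℝ | ∃ X : Finset I, X.Nonempty ∧ y ∉ X ∧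
           a = inf1 {b : ℝ | ∃ r ∈ X, ∃ s, s ∉ X ∧ b = v.p r s}}))
  p := fun u w => max (v.p u w)
    (sup0 {a : ℝ | ∃ X : Finset I, w ∈ X ∧ u ∉ X ∧
      a = min (max (inf1 {b : ℝ | ∃ r ∈ X, b = v.nt r})
                   (sup0 {b : ℝ | ∃ s, s ∉ X ∧ b = v.t s}))
              (inf1 {b : ℝ | ∃ r ∈ X, ∃ s, s ∉ X ∧ ¬(r = w ∧ s = u) ∧
                b = v.p r s})})

/- ----------------- auxiliary lemmas ----------------- -/

lemma finset_of {β : Type*} [Finite β] (g : β → ℝ) {S : Set ℝ} (h : S ⊆ Set.range g) :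
    S.Finite := (Set.finite_range g).subset h

lemma sup0_exists {S : Set ℝ} (hf : S.Finite) {α : ℝ} (hα : 0 < α) (h : α ≤ sup0 S) :
    ∃ b ∈ S, α ≤ b := by
  rcases S.eq_empty_or_nonempty with rfl | hne
  · exfalso; rw [sup0, Real.sSup_empty] at h; linarith
  · exact ⟨sSup S, hne.csSup_mem hf, h⟩

lemma inf1_le_mem {S : Set ℝ} (hf : S.Finite) {b : ℝ} (hb : b ∈ S) : inf1 S ≤ b := by
  rw [inf1, if_pos ⟨b, hb⟩]; exact csInf_le hf.bddBelow hb

lemma le_sup0_mem {S : Set ℝ} (hf : S.Finite) {b : ℝ} (hb : b ∈ S) : b ≤ sup0 S :=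
  le_csSup hf.bddAbove hb

lemma exists_lt_of_inf1_lt {S : Set ℝ} (hf : S.Finite) (hne : S.Nonempty) {α : ℝ}
    (h : inf1 S < α) : ∃ b ∈ S, b < α := by
  refine ⟨sInf S, hne.csInf_mem hf, ?_⟩
  rwa [inf1, if_pos hne] at h

/-- Pointwise order between valuations. -/
def ple {I : Type*} (a b : PVal I) : Prop :=
  (∀ z, a.t z ≤ b.t z) ∧ (∀ z, a.nt z ≤ b.nt z) ∧ (∀ u w, a.p u w ≤ b.p u w)

lemma ple_refl {I : Type*} (a : PVal I) : ple a a :=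
  ⟨fun _ => le_rfl, fun _ => le_rfl, fun _ _ => le_rfl⟩

lemma ple_trans {I : Type*} {a b c : PVal I} (h1 : ple a b) (h2 : ple b c) : ple a c :=
  ⟨fun z => (h1.1 z).trans (h2.1 z), fun z => (h1.2.1 z).trans (h2.2.1 z),
   fun u w => (h1.2.2 u w).trans (h2.2.2 u w)⟩

lemma ple_Tcp {I : Type*} (w : PVal I) : ple w (Tcp w) :=
  ⟨fun _ => le_max_left _ _, fun _ => le_max_left _ _, fun _ _ => le_max_left _ _⟩

lemma ple_iterate {I : Type*} (v : PVal I) (n k : ℕ) :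
    ple (Tcp^[n] v) (Tcp^[n + k] v) := by
  induction k with
  | zero => exact ple_refl _
  | succ k ih =>
    have : Tcp^[n + (k + 1)] v = Tcp (Tcp^[n + k] v) := by
      rw [← Nat.add_assoc, Function.iterate_succ_apply']
    rw [this]
    exact ple_trans ih (ple_Tcp _)

/-- If there is a unique comprehensive prominence winner `x` (i.e. `t_x` is
accepted by the upper revised valuation), then `x` is also the unique maximin
winner. -/
theorem stmt18 {I : Type*} [Fintype I] [DecidableEq I]
    (hcard : 2 ≤ Fintype.card I)
    (v : PVal I)
    (hbox : ∀ x y : I, x ≠ y → v.p x y ∈ Set.Icc (0:ℝ) 1)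
    (ht : ∀ x, v.t x = 0) (hnt : ∀ x, v.nt x = 0)
    (vstar : PVal I) (hstar : ∃ N : ℕ, ∀ n ≥ N, Tcp^[n] v = vstar)
    (x : I) (hwin : vstar.nt x < vstar.t x) :
    ∀ y : I, y ≠ x →
      inf1 {b : ℝ | ∃ s, s ≠ y ∧ b = v.p y s} <
      inf1 {b : ℝ | ∃ s, s ≠ x ∧ b = v.p x s} := by
  obtain ⟨N, hN⟩ := hstar
  have hfix : Tcp vstar = vstar := by
    calc Tcp vstar = Tcp (Tcp^[N] v) := by rw [hN N le_rfl]
      _ = Tcp^[N + 1] v := (Function.iterate_succ_apply' _ _ _).symm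
      _ = vstar := hN (N + 1) (Nat.le_succ N)
  have hle_star : ∀ n, ple (Tcp^[n] v) vstar := by
    intro n
    have h1 : ple (Tcp^[n] v) (Tcp^[n + N] v) := ple_iterate v n N
    rwa [hN (n + N) (Nat.le_add_left N n)] at h1
  have hv_star : ple v vstar := by simpa using hle_star 0
  set α := vstar.t x with hαdef
  have hα0 : 0 < α := by
    have h0 : (0 : ℝ) ≤ vstar.nt x := by rw [← hnt x]; exact hv_star.2.1 x
    linarith [hwin]
  -- fact (a): competitors' t-values are dominated by vstar.nt x < α
  have ha : ∀ r, r ≠ x → vstar.t r ≤ vstar.nt x := by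
    intro r hr
    have hfin : ({a : ℝ | ∃ r', r' ≠ x ∧ a = vstar.t r'}).Finite :=
      finset_of vstar.t (by rintro _ ⟨r', -, rfl⟩; exact ⟨r', rfl⟩)
    have h1 : vstar.t r ≤ (Tcp vstar).nt x :=
      le_trans (le_sup0_mem hfin ⟨r, hr, rfl⟩)
        (le_trans (le_max_left _ _) (le_max_right _ _))
    rwa [hfix] at h1
  -- fact (b): every cut avoiding x has a weak edge
  have hb : ∀ Y : Finset I, Y.Nonempty → x ∉ Y →
      ∃ r ∈ Y, ∃ s, s ∉ Y ∧ vstar.p r s < α := by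
    intro Y hYne hxY
    have hCfin : ({b : ℝ | ∃ r ∈ Y, ∃ s, s ∉ Y ∧ b = vstar.p r s}).Finite :=
      finset_of (fun rs : I × I => vstar.p rs.1 rs.2)
        (by rintro _ ⟨r, -, s, -, rfl⟩; exact ⟨(r, s), rfl⟩)
    obtain ⟨r0, hr0⟩ := hYne
    have hCne : Set.Nonempty {b : ℝ | ∃ r ∈ Y, ∃ s, s ∉ Y ∧ b = vstar.p r s} :=
      ⟨vstar.p r0 x, r0, hr0, x, hxY, rfl⟩
    have hBfin : ({a : ℝ | ∃ X : Finset I, X.Nonempty ∧ x ∉ X ∧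
        a = inf1 {b : ℝ | ∃ r ∈ X, ∃ s, s ∉ X ∧ b = vstar.p r s}}).Finite :=
      finset_of (fun X : Finset I => inf1 {b : ℝ | ∃ r ∈ X, ∃ s, s ∉ X ∧ b = vstar.p r s})
        (by rintro _ ⟨X, -, -, rfl⟩; exact ⟨X, rfl⟩)
    have h1 : inf1 {b : ℝ | ∃ r ∈ Y, ∃ s, s ∉ Y ∧ b = vstar.p r s} ≤ vstar.nt x := by
      have h2 := le_sup0_mem hBfin (show _ ∈ _ from ⟨Y, ⟨r0, hr0⟩, hxY, rfl⟩)
      calc inf1 {b : ℝ | ∃ r ∈ Y, ∃ s, s ∉ Y ∧ b = vstar.p r s} ≤ _ := h2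
        _ ≤ (Tcp vstar).nt x := le_trans (le_max_right _ _) (le_max_right _ _)
        _ = vstar.nt x := by rw [hfix]
    obtain ⟨b, hbC, hbα⟩ := exists_lt_of_inf1_lt hCfin hCne (lt_of_le_of_lt h1 hwin)
    obtain ⟨r, hr, s, hs, rfl⟩ := hbC
    exact ⟨r, hr, s, hs, hbα⟩
  -- the main invariant, by induction on the number of revision steps
  have key : ∀ n, (∀ s, s ≠ x → α ≤ (Tcp^[n] v).p x s → α ≤ v.p x s) ∧
      (∀ s, s ≠ x → α ≤ (Tcp^[n] v).nt s → α ≤ v.p x s) ∧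
      (α ≤ (Tcp^[n] v).t x → ∀ s, s ≠ x → α ≤ v.p x s) := by
    intro n
    induction n with
    | zero =>
      refine ⟨fun s _ h => by simpa using h, fun s _ h => ?_, fun h s _ => ?_⟩
      · rw [Function.iterate_zero_apply, hnt s] at h; linarith
      · rw [Function.iterate_zero_apply, ht x] at h; linarith
    | succ n ih =>
      obtain ⟨ihP, ihN, ihR⟩ := ih
      have hw := hle_star n
      set w := Tcp^[n] v with hwdef
      rw [Function.iterate_succ_apply']
      have hN' : ∀ s, s ≠ x → α ≤ (Tcp w).nt s → α ≤ v.p x s := by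
        intro s hsx h
        simp only [Tcp] at h
        rcases le_max_iff.mp h with h1 | h1
        · exact ihN s hsx h1
        rcases le_max_iff.mp h1 with h2 | h2
        · have hfin : ({a : ℝ | ∃ r, r ≠ s ∧ a = w.t r}).Finite :=
            finset_of w.t (by rintro _ ⟨r, -, rfl⟩; exact ⟨r, rfl⟩)
          obtain ⟨b, ⟨r, hrs, rfl⟩, hbα⟩ := sup0_exists hfin hα0 h2
          by_cases hrx : r = x
          · subst hrx; exact ihR hbα s hsx
          · exact absurd hbα (not_le.mpr
              (lt_of_le_of_lt (le_trans (hw.1 r) (ha r hrx)) hwin))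
        · have hfin : ({a : ℝ | ∃ X : Finset I, X.Nonempty ∧ s ∉ X ∧
              a = inf1 {b : ℝ | ∃ r ∈ X, ∃ s', s' ∉ X ∧ b = w.p r s'}}).Finite :=
            finset_of (fun X : Finset I =>
                inf1 {b : ℝ | ∃ r ∈ X, ∃ s', s' ∉ X ∧ b = w.p r s'})
              (by rintro _ ⟨X, -, -, rfl⟩; exact ⟨X, rfl⟩)
          obtain ⟨b, ⟨Y, hYne, hsY, rfl⟩, hbα⟩ := sup0_exists hfin hα0 h2
          have hcfin : ({b : ℝ | ∃ r ∈ Y, ∃ s', s' ∉ Y ∧ b = w.p r s'}).Finite :=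
            finset_of (fun rs : I × I => w.p rs.1 rs.2)
              (by rintro _ ⟨r, -, s', -, rfl⟩; exact ⟨(r, s'), rfl⟩)
          by_cases hxY : x ∈ Y
          · exact ihP s hsx (le_trans hbα (inf1_le_mem hcfin ⟨x, hxY, s, hsY, rfl⟩))
          · obtain ⟨r, hr, s', hs', hlt⟩ := hb Y hYne hxY
            have h3 : α ≤ w.p r s' := le_trans hbα (inf1_le_mem hcfin ⟨r, hr, s', hs', rfl⟩)
            exact absurd h3 (not_le.mpr (lt_of_le_of_lt (hw.2.2 r s') hlt))
      have hP' : ∀ s, s ≠ x → α ≤ (Tcp w).p x s → α ≤ v.p x s := by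
        intro s hsx h
        simp only [Tcp] at h
        rcases le_max_iff.mp h with h1 | h1
        · exact ihP s hsx h1
        · have hfin : ({a : ℝ | ∃ X : Finset I, s ∈ X ∧ x ∉ X ∧
              a = min (max (inf1 {b : ℝ | ∃ r ∈ X, b = w.nt r})
                           (sup0 {b : ℝ | ∃ s', s' ∉ X ∧ b = w.t s'}))
                      (inf1 {b : ℝ | ∃ r ∈ X, ∃ s', s' ∉ X ∧ ¬(r = s ∧ s' = x) ∧
                        b = w.p r s'})}).Finite :=
            finset_of (fun X : Finset I =>
                min (max (inf1 {b : ℝ | ∃ r ∈ X, b = w.nt r})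
                         (sup0 {b : ℝ | ∃ s', s' ∉ X ∧ b = w.t s'}))
                    (inf1 {b : ℝ | ∃ r ∈ X, ∃ s', s' ∉ X ∧ ¬(r = s ∧ s' = x) ∧
                      b = w.p r s'}))
              (by rintro _ ⟨X, -, -, rfl⟩; exact ⟨X, rfl⟩)
          obtain ⟨b, ⟨X, hsX, hxX, rfl⟩, hbα⟩ := sup0_exists hfin hα0 h1
          have hmax : α ≤ max (inf1 {b : ℝ | ∃ r ∈ X, b = w.nt r})
              (sup0 {b : ℝ | ∃ s', s' ∉ X ∧ b = w.t s'}) :=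
            le_trans hbα (min_le_left _ _)
          rcases le_max_iff.mp hmax with h2 | h2
          · have hntfin : ({b : ℝ | ∃ r ∈ X, b = w.nt r}).Finite :=
              finset_of w.nt (by rintro _ ⟨r, -, rfl⟩; exact ⟨r, rfl⟩)
            exact ihN s hsx (le_trans h2 (inf1_le_mem hntfin ⟨s, hsX, rfl⟩))
          · have htfin : ({b : ℝ | ∃ s', s' ∉ X ∧ b = w.t s'}).Finite :=
              finset_of w.t (by rintro _ ⟨s', -, rfl⟩; exact ⟨s', rfl⟩)
            obtain ⟨b, ⟨z, hzX, rfl⟩, hbα2⟩ := sup0_exists htfin hα0 h2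
            by_cases hzx : z = x
            · subst hzx; exact ihR hbα2 s hsx
            · exact absurd hbα2 (not_le.mpr
                (lt_of_le_of_lt (le_trans (hw.1 z) (ha z hzx)) hwin))
      have hR' : α ≤ (Tcp w).t x → ∀ s, s ≠ x → α ≤ v.p x s := by
        intro h s hsx
        simp only [Tcp] at h
        rcases le_max_iff.mp h with h1 | h1
        · exact ihR h1 s hsx
        · have hfin : ({a : ℝ | ∃ X : Finset I, x ∈ X ∧
              a = min (inf1 {b : ℝ | ∃ r ∈ X, r ≠ x ∧ b = w.nt r})
                      (inf1 {b : ℝ | ∃ r ∈ X, ∃ s', s' ∉ X ∧ b = w.p r s'})}).Finite :=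
            finset_of (fun X : Finset I =>
                min (inf1 {b : ℝ | ∃ r ∈ X, r ≠ x ∧ b = w.nt r})
                    (inf1 {b : ℝ | ∃ r ∈ X, ∃ s', s' ∉ X ∧ b = w.p r s'}))
              (by rintro _ ⟨X, -, rfl⟩; exact ⟨X, rfl⟩)
          obtain ⟨b, ⟨X, hxX, rfl⟩, hbα⟩ := sup0_exists hfin hα0 h1
          by_cases hsX : s ∈ X
          · have hntfin : ({b : ℝ | ∃ r ∈ X, r ≠ x ∧ b = w.nt r}).Finite :=
              finset_of w.nt (by rintro _ ⟨r, -, -, rfl⟩; exact ⟨r, rfl⟩)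
            exact ihN s hsx (le_trans (le_trans hbα (min_le_left _ _))
              (inf1_le_mem hntfin ⟨s, hsX, hsx, rfl⟩))
          · have hcfin : ({b : ℝ | ∃ r ∈ X, ∃ s', s' ∉ X ∧ b = w.p r s'}).Finite :=
              finset_of (fun rs : I × I => w.p rs.1 rs.2)
                (by rintro _ ⟨r, -, s', -, rfl⟩; exact ⟨(r, s'), rfl⟩)
            exact ihP s hsx (le_trans (le_trans hbα (min_le_right _ _))
              (inf1_le_mem hcfin ⟨x, hxX, s, hsX, rfl⟩))
      exact ⟨hP', hN', hR'⟩
  -- x is dominant at level α in the original valuation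
  have hdom : ∀ s, s ≠ x → α ≤ v.p x s := by
    have h1 := (key N).2.2
    rw [hN N le_rfl] at h1
    exact fun s hs => h1 le_rfl s hs
  intro y hyx
  -- Step A : α ≤ maximin of x
  have hA : α ≤ inf1 {b : ℝ | ∃ s, s ≠ x ∧ b = v.p x s} := by
    obtain ⟨s0, hs0⟩ := Fintype.exists_ne_of_one_lt_card (by omega) x
    have hne : Set.Nonempty {b : ℝ | ∃ s, s ≠ x ∧ b = v.p x s} := ⟨v.p x s0, s0, hs0, rfl⟩
    rw [inf1, if_pos hne]
    refine le_csInf hne ?_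
    rintro b ⟨s, hs, rfl⟩
    exact hdom s hs
  -- Step B : maximin of y is below α
  have hB : inf1 {b : ℝ | ∃ s, s ≠ y ∧ b = v.p y s} < α := by
    by_contra hc
    push_neg at hc
    have hsets : {b : ℝ | ∃ r ∈ ({y} : Finset I), ∃ s, s ∉ ({y} : Finset I) ∧ b = v.p r s}
        = {b : ℝ | ∃ s, s ≠ y ∧ b = v.p y s} := by
      ext b
      constructor
      · rintro ⟨r, hr, s, hs, rfl⟩
        rw [Finset.mem_singleton] at hr; subst hr
        exact ⟨s, by simpa [Finset.mem_singleton] using hs, rfl⟩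
      · rintro ⟨s, hs, rfl⟩
        exact ⟨y, Finset.mem_singleton_self y, s, by simpa [Finset.mem_singleton] using hs, rfl⟩
    have hcut : α ≤ inf1 {b : ℝ | ∃ r ∈ ({y} : Finset I), ∃ s, s ∉ ({y} : Finset I) ∧
        b = v.p r s} := by rw [hsets]; exact hc
    have hBfin : ({a : ℝ | ∃ X : Finset I, X.Nonempty ∧ x ∉ X ∧
        a = inf1 {b : ℝ | ∃ r ∈ X, ∃ s, s ∉ X ∧ b = v.p r s}}).Finite :=
      finset_of (fun X : Finset I => inf1 {b : ℝ | ∃ r ∈ X, ∃ s, s ∉ X ∧ b = v.p r s})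
        (by rintro _ ⟨X, -, -, rfl⟩; exact ⟨X, rfl⟩)
    have hmem : inf1 {b : ℝ | ∃ r ∈ ({y} : Finset I), ∃ s, s ∉ ({y} : Finset I) ∧ b = v.p r s}
        ∈ {a : ℝ | ∃ X : Finset I, X.Nonempty ∧ x ∉ X ∧
          a = inf1 {b : ℝ | ∃ r ∈ X, ∃ s, s ∉ X ∧ b = v.p r s}} :=
      ⟨{y}, Finset.singleton_nonempty y,
        by simpa [Finset.mem_singleton] using Ne.symm hyx, rfl⟩
    have h1 : α ≤ (Tcp v).nt x :=
      le_trans hcut (le_trans (le_sup0_mem hBfin hmem)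
        (le_trans (le_max_right _ _) (le_max_right _ _)))
    have h2 : ple (Tcp v) vstar := by
      have h3 := hle_star 1
      rwa [Function.iterate_one] at h3
    have h4 : α ≤ vstar.nt x := le_trans h1 (h2.2.1 x)
    linarith [hwin]
  exact lt_of_lt_of_le hB hA
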